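/- Let n, m, p, q, d be positive integers. Let A (n×n), B (n×m), C (p×n), C_z (q×n), D (n×d) be real matrices; let W (d×d), V (p×p), Γ_w (m×m), Γ_v (p×p) be symmetric positive definite matrices, Z̄ a symmetric q×q matrix, X and Y symmetric n×n matrices, L an m×n matrix, F an n×p matrix, and Q an n×n matrix. Assume: (i) the symmetric 8×8 block matrix with upper-triangular blocks given by row 1: [X, I, AX + BL, A, D, B, 0, 0], row 2: [Y, Q, YA + FC, YD, YB, F, F], row 3: [X, I, 0, 0, 0, 0], row 4: [Y, 0, 0, 0, 0], row 5: [W⁻¹, 0, 0, 0], row 6: [Γ_w, 0, 0], row 7: [V⁻¹, 0], row 8: [Γ_v] is positive definite; and (ii) the block matrix [[Z̄, C_z·X, C_z], [X·C_zᵀ, X, I], [C_zᵀ, I, Y]] is positive definite. Then Y and U := Y⁻¹ − X are invertible, and defining B_c = Y⁻¹·F, C_c = L·U⁻¹, A_c = Y⁻¹·(Q − Y·A·X − F·C·X − Y·B·L)·U⁻¹, and the closed-loop matrices 𝐀 = [[A, B·C_c], [B_c·C, A_c]] (2n×2n), 𝐁 = [[D, B, 0, 0], [0, 0, B_c, B_c]]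 (2n×(d+m+p+p)), 𝐂 = [C_z, 0] (q×2n), 𝐖 = blockdiag(W, Γ_w⁻¹, V, Γ_v⁻¹), there exists a symmetric positive definite 2n×2n matrix 𝐗 such that 𝐗 − 𝐀𝐗𝐀ᵀ − 𝐁𝐖𝐁ᵀ is positive definite and Z̄ − 𝐂𝐗𝐂ᵀ is positive definite. -/

import Mathlib

open Matrix

section Aux

variable {ι κ : Type*} [Fintype ι] [Fintype κ] [DecidableEq ι] [DecidableEq κ]

lemma myPosDef_of_psd_det {M : Matrix ι ι ℝ} (h : M.PosSemidef) (hd : M.det ≠ 0) :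
    M.PosDef := by
  refine posDef_iff_dotProduct_mulVec.mpr
    ⟨h.1, fun x hx => lt_of_le_of_ne (h.dotProduct_mulVec_nonneg x) fun heq => ?_⟩
  have h0 : M *ᵥ x = 0 := (h.dotProduct_mulVec_zero_iff x).mp heq.symm
  have hinj : Function.Injective (M.mulVec) :=
    mulVec_injective_iff_isUnit.mpr ((isUnit_iff_isUnit_det M).mpr hd.isUnit)
  exact hx (hinj (by simpa using h0))

lemma myCongr_posDef' {M N : Matrix ι ι ℝ} (hM : M.PosDef) (hN : N.det ≠ 0) :
    (N * M * Nᵀ).PosDef := by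
  have psd : (N * M * Nᵀ).PosSemidef := by
    have := hM.posSemidef.mul_mul_conjTranspose_same N
    rwa [conjTranspose_eq_transpose_of_trivial] at this
  refine myPosDef_of_psd_det psd ?_
  rw [det_mul, det_mul, det_transpose]
  exact mul_ne_zero (mul_ne_zero hN hM.det_pos.ne') hN

omit [DecidableEq ι] [DecidableEq κ] in
lemma myCorner₁ {A : Matrix ι ι ℝ} {B : Matrix ι κ ℝ} {C : Matrix κ ι ℝ} {D : Matrix κ κ ℝ}
    (h : (fromBlocks A B C D).PosDef) : A.PosDef := by
  refine posDef_iff_dotProduct_mulVec.mpr ⟨?_, ?_⟩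
  · ext i j
    have := congrFun (congrFun h.1 (Sum.inl i)) (Sum.inl j)
    simpa [conjTranspose_apply] using this
  · intro x hx
    have hv : (Sum.elim x 0 : ι ⊕ κ → ℝ) ≠ 0 := by
      intro hc
      exact hx (funext fun i => congrFun hc (Sum.inl i))
    have := h.dotProduct_mulVec_pos hv
    have hstar : star (Sum.elim x 0 : ι ⊕ κ → ℝ) = Sum.elim (star x) 0 := by
      funext i; cases i <;> simp
    simp only [hstar, fromBlocks_mulVec, Sum.elim_comp_inl, Sum.elim_comp_inr,
      mulVec_zero, add_zero, sumElim_dotProduct_sumElim, zero_dotProduct] at this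
    exact this

omit [DecidableEq ι] [DecidableEq κ] in
lemma myCorner₂ {A : Matrix ι ι ℝ} {B : Matrix ι κ ℝ} {C : Matrix κ ι ℝ} {D : Matrix κ κ ℝ}
    (h : (fromBlocks A B C D).PosDef) : D.PosDef := by
  refine posDef_iff_dotProduct_mulVec.mpr ⟨?_, ?_⟩
  · ext i j
    have := congrFun (congrFun h.1 (Sum.inr i)) (Sum.inr j)
    simpa [conjTranspose_apply] using this
  · intro x hx
    have hv : (Sum.elim (0 : ι → ℝ) x : ι ⊕ κ → ℝ) ≠ 0 := by
      intro hc
      exact hx (funext fun i => congrFun hc (Sum.inr i))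
    have := h.dotProduct_mulVec_pos hv
    have hstar : star (Sum.elim (0 : ι → ℝ) x : ι ⊕ κ → ℝ)
        = Sum.elim (0 : ι → ℝ) (star x) := by
      funext i; cases i <;> simp
    simp only [hstar, fromBlocks_mulVec, Sum.elim_comp_inl, Sum.elim_comp_inr,
      mulVec_zero, zero_add, sumElim_dotProduct_sumElim, zero_dotProduct] at this
    exact this

lemma mySchur₂₂ {A : Matrix ι ι ℝ} {B : Matrix ι κ ℝ} {D : Matrix κ κ ℝ}
    (h : (fromBlocks A B Bᵀ D).PosDef) (hD : D.PosDef) :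
    (A - B * D⁻¹ * Bᵀ).PosDef := by
  haveI := hD.isUnit.invertible
  have hB : Bᵀ = Bᴴ := (conjTranspose_eq_transpose_of_trivial B).symm
  have psd : (A - B * D⁻¹ * Bᵀ).PosSemidef := by
    rw [hB]
    exact (PosDef.fromBlocks₂₂ A B hD).mp (by rw [← hB]; exact h.posSemidef)
  refine myPosDef_of_psd_det psd ?_
  have hdet := det_fromBlocks₂₂ A B Bᵀ D
  rw [invOf_eq_nonsing_inv] at hdet
  have hne : (fromBlocks A B Bᵀ D).det ≠ 0 := h.det_pos.ne'
  rw [hdet] at hne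
  exact fun hc => hne (by rw [hc, mul_zero])

omit [DecidableEq ι] [DecidableEq κ] in
lemma myBlockDiagPosDef {A : Matrix ι ι ℝ} {D : Matrix κ κ ℝ}
    (hA : A.PosDef) (hD : D.PosDef) : (fromBlocks A 0 0 D).PosDef := by
  refine posDef_iff_dotProduct_mulVec.mpr ⟨?_, ?_⟩
  · have h1 := hA.1; have h2 := hD.1
    rw [IsHermitian, fromBlocks_conjTranspose, conjTranspose_zero, conjTranspose_zero, h1, h2]
  · intro x hx
    have hxe : x = Sum.elim (x ∘ Sum.inl) (x ∘ Sum.inr) := (Sum.elim_comp_inl_inr x).symm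
    have hstar : star x = Sum.elim (star (x ∘ Sum.inl)) (star (x ∘ Sum.inr)) := by
      funext i; cases i <;> simp
    rw [hstar, hxe]
    simp only [fromBlocks_mulVec, Sum.elim_comp_inl, Sum.elim_comp_inr, zero_mulVec,
      add_zero, zero_add, sumElim_dotProduct_sumElim]
    rcases (by
      by_contra hc
      push_neg at hc
      exact hx (by rw [hxe, hc.1, hc.2]; simp) : x ∘ Sum.inl ≠ 0 ∨ x ∘ Sum.inr ≠ 0) with h | h
    · exact add_pos_of_pos_of_nonneg (hA.dotProduct_mulVec_pos h) (hD.posSemidef.dotProduct_mulVec_nonneg _)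
    · exact add_pos_of_nonneg_of_pos (hA.posSemidef.dotProduct_mulVec_nonneg _) (hD.dotProduct_mulVec_pos h)

lemma myBlockDiagInv {A : Matrix ι ι ℝ} {D : Matrix κ κ ℝ}
    (hA : IsUnit A.det) (hD : IsUnit D.det) :
    (fromBlocks A 0 0 D)⁻¹ = fromBlocks A⁻¹ 0 0 D⁻¹ := by
  apply inv_eq_right_inv
  rw [fromBlocks_multiply]
  simp [mul_nonsing_inv _ hA, mul_nonsing_inv _ hD, fromBlocks_one]

lemma myCongr_cancel {T N S : Matrix ι ι ℝ} (hN : IsUnit N.det)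
    (h : Nᵀ * T * N = S) (hS : S.PosDef) : T.PosDef := by
  have hNT : IsUnit (Nᵀ).det := by rwa [det_transpose]
  have hT : T = (Nᵀ)⁻¹ * S * N⁻¹ := by
    rw [← h, ← Matrix.mul_assoc, ← Matrix.mul_assoc, nonsing_inv_mul _ hNT, one_mul,
      Matrix.mul_assoc, mul_nonsing_inv _ hN, mul_one]
  rw [hT]
  have hTr : ((Nᵀ)⁻¹)ᵀ = N⁻¹ := by rw [transpose_nonsing_inv, transpose_transpose]
  rw [← hTr]
  exact myCongr_posDef' hS (isUnit_nonsing_inv_det _ hNT).ne_zero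

end Aux

theorem theorem1_controller_synthesis
    (n m p q d : ℕ) (hn : 0 < n) (hm : 0 < m) (hp : 0 < p) (hq : 0 < q) (hd : 0 < d)
    (A : Matrix (Fin n) (Fin n) ℝ) (B : Matrix (Fin n) (Fin m) ℝ)
    (C : Matrix (Fin p) (Fin n) ℝ) (Cz : Matrix (Fin q) (Fin n) ℝ)
    (D : Matrix (Fin n) (Fin d) ℝ)
    (W : Matrix (Fin d) (Fin d) ℝ) (V : Matrix (Fin p) (Fin p) ℝ)
    (Gw : Matrix (Fin m) (Fin m) ℝ) (Gv : Matrix (Fin p) (Fin p) ℝ)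
    (hW : W.PosDef) (hV : V.PosDef) (hGw : Gw.PosDef) (hGv : Gv.PosDef)
    (Zbar : Matrix (Fin q) (Fin q) ℝ) (hZbar : Zbar.IsHermitian)
    (X Y : Matrix (Fin n) (Fin n) ℝ) (hXsymm : X.IsHermitian) (hYsymm : Y.IsHermitian)
    (L : Matrix (Fin m) (Fin n) ℝ) (F : Matrix (Fin n) (Fin p) ℝ)
    (Q : Matrix (Fin n) (Fin n) ℝ)
    -- LMI (10)
    (hLMI1 :
      (fromBlocks
        (fromBlocks
          (fromBlocks X 1 1 Y)
          (fromBlocks (A * X + B * L) A Q (Y * A + F * C))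
          (fromBlocks (A * X + B * L) A Q (Y * A + F * C))ᵀ
          (fromBlocks X 1 1 Y))
        (fromBlocks (fromBlocks D B (Y * D) (Y * B)) (fromBlocks 0 0 F F) 0 0)
        (fromBlocks (fromBlocks D B (Y * D) (Y * B)) (fromBlocks 0 0 F F) 0 0)ᵀ
        (fromBlocks (fromBlocks W⁻¹ 0 0 Gw) 0 0 (fromBlocks V⁻¹ 0 0 Gv))).PosDef)
    -- LMI (11)
    (hLMI2 :
      (fromBlocks Zbar (fromCols (Cz * X) Cz)
        (fromRows (X * Czᵀ) Czᵀ) (fromBlocks X 1 1 Y)).PosDef)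
    -- controller reconstruction with S = Y, U = Y⁻¹ − X, D_c = 0
    (U : Matrix (Fin n) (Fin n) ℝ) (hU : U = Y⁻¹ - X)
    (Bc : Matrix (Fin n) (Fin p) ℝ) (hBc : Bc = Y⁻¹ * F)
    (Cc : Matrix (Fin m) (Fin n) ℝ) (hCc : Cc = L * U⁻¹)
    (Ac : Matrix (Fin n) (Fin n) ℝ)
    (hAc : Ac = Y⁻¹ * (Q - Y * A * X - F * C * X - Y * B * L) * U⁻¹) :
    IsUnit Y ∧ IsUnit U ∧
    ∃ Xb : Matrix (Fin n ⊕ Fin n) (Fin n ⊕ Fin n) ℝ,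
      Xb.PosDef ∧
      (Xb - (fromBlocks A (B * Cc) (Bc * C) Ac) * Xb * (fromBlocks A (B * Cc) (Bc * C) Ac)ᵀ
        - (fromBlocks (fromCols D B) 0 0 (fromCols Bc Bc) :
            Matrix (Fin n ⊕ Fin n) ((Fin d ⊕ Fin m) ⊕ (Fin p ⊕ Fin p)) ℝ)
          * (fromBlocks (fromBlocks W 0 0 Gw⁻¹) 0 0 (fromBlocks V 0 0 Gv⁻¹))
          * (fromBlocks (fromCols D B) 0 0 (fromCols Bc Bc) :
            Matrix (Fin n ⊕ Fin n) ((Fin d ⊕ Fin m) ⊕ (Fin p ⊕ Fin p)) ℝ)ᵀ).PosDef ∧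
      (Zbar - (fromCols Cz 0 : Matrix (Fin q) (Fin n ⊕ Fin n) ℝ) * Xb
        * (fromCols Cz 0 : Matrix (Fin q) (Fin n ⊕ Fin n) ℝ)ᵀ).PosDef := by
  classical
  have hXT : Xᵀ = X := by
    rw [← conjTranspose_eq_transpose_of_trivial]; exact hXsymm
  have hYT : Yᵀ = Y := by
    rw [← conjTranspose_eq_transpose_of_trivial]; exact hYsymm
  set R : Matrix (Fin n ⊕ Fin n) (Fin n ⊕ Fin n) ℝ := fromBlocks X 1 1 Y with hR_def
  have hR : R.PosDef := myCorner₂ hLMI2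
  have hX : X.PosDef := myCorner₁ hR
  have hY : Y.PosDef := myCorner₂ hR
  have hYdet : IsUnit Y.det := hY.det_pos.ne'.isUnit
  have hYu : IsUnit Y := hY.isUnit
  have hRdet : IsUnit R.det := hR.det_pos.ne'.isUnit
  -- U is invertible
  have hRalt : (fromBlocks X (1 : Matrix (Fin n) (Fin n) ℝ)
      (1 : Matrix (Fin n) (Fin n) ℝ)ᵀ Y).PosDef := by rwa [transpose_one]
  have hXY : (X - Y⁻¹).PosDef := by
    have := mySchur₂₂ hRalt hY
    simpa [transpose_one] using this
  have hUneg : (-U).PosDef := by rw [hU]; simpa [neg_sub] using hXY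
  have hUdet : U.det ≠ 0 := by
    intro hc
    have h0 : (-U).det = 0 := by rw [← neg_one_smul ℝ U, det_smul, hc, mul_zero]
    exact hUneg.det_pos.ne' h0
  have hUu : IsUnit U := (isUnit_iff_isUnit_det U).mpr hUdet.isUnit
  refine ⟨hYu, hUu, ?_⟩
  -- basic identities
  have hYYinv : Y * Y⁻¹ = 1 := mul_nonsing_inv _ hYdet
  have hUUinv : U⁻¹ * U = 1 := nonsing_inv_mul _ hUdet.isUnit
  have hYXU : Y * X + Y * U = 1 := by
    rw [hU, Matrix.mul_sub, mul_nonsing_inv _ hYdet]; abel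
  set P1 : Matrix (Fin n ⊕ Fin n) (Fin n ⊕ Fin n) ℝ := fromBlocks X 1 U 0 with hP1_def
  set P2 : Matrix (Fin n ⊕ Fin n) (Fin n ⊕ Fin n) ℝ := fromBlocks 1 Y 0 Y with hP2_def
  have hP2T : P2ᵀ = fromBlocks 1 0 Y Y := by
    rw [hP2_def, fromBlocks_transpose, transpose_one, transpose_zero, hYT]
  have hPP : P2ᵀ * P1 = R := by
    rw [hP2T, hP1_def, fromBlocks_multiply, hR_def]
    simp [hYXU]
  have hP2det : P2.det ≠ 0 := by
    rw [hP2_def, det_fromBlocks_zero₂₁, det_one, one_mul]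
    exact hY.det_pos.ne'
  have hRT : Rᵀ = R := by
    rw [hR_def, fromBlocks_transpose, hXT, hYT, transpose_one]
  have hP1det : P1.det ≠ 0 := by
    have h1 := congrArg det hPP
    rw [det_mul, det_transpose] at h1
    intro hc
    rw [hc, mul_zero] at h1
    exact hRdet.ne_zero h1.symm
  set Xb : Matrix (Fin n ⊕ Fin n) (Fin n ⊕ Fin n) ℝ := P1 * R⁻¹ * P1ᵀ with hXb_def
  have hXbPD : Xb.PosDef := myCongr_posDef' hR.inv hP1det
  have hP1P2 : P1ᵀ * P2 = R := by
    rw [← hRT, ← hPP, transpose_mul, transpose_transpose]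
  have hXbP2 : Xb * P2 = P1 := by
    rw [hXb_def, Matrix.mul_assoc (P1 * R⁻¹), hP1P2, Matrix.mul_assoc,
      nonsing_inv_mul _ hRdet, Matrix.mul_one]
  refine ⟨Xb, hXbPD, ?_, ?_⟩
  · -- main Lyapunov inequality
    set AA : Matrix (Fin n ⊕ Fin n) (Fin n ⊕ Fin n) ℝ :=
      fromBlocks A (B * Cc) (Bc * C) Ac with hAA_def
    set G : Matrix (Fin n ⊕ Fin n) (Fin n ⊕ Fin n) ℝ :=
      fromBlocks (A * X + B * L) A Q (Y * A + F * C) with hG_def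
    -- controller reconstruction identities
    have f1 : B * Cc * U = B * L := by
      rw [hCc, Matrix.mul_assoc, Matrix.mul_assoc, hUUinv, Matrix.mul_one]
    have f2 : Y * Bc = F := by
      rw [hBc, ← Matrix.mul_assoc, hYYinv, Matrix.one_mul]
    have f3 : Y * Ac * U = Q - Y * A * X - F * C * X - Y * B * L := by
      rw [hAc, ← Matrix.mul_assoc, ← Matrix.mul_assoc, hYYinv, Matrix.one_mul,
        Matrix.mul_assoc, hUUinv, Matrix.mul_one]
    have hG : P2ᵀ * (AA * P1) = G := by
      rw [hP2T, hAA_def, hP1_def, fromBlocks_multiply, fromBlocks_multiply, hG_def]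
      rw [fromBlocks_inj]
      refine ⟨?_, ?_, ?_, ?_⟩
      · simp [f1]
      · simp
      · -- Y * (A*X + B*Cc*U) + Y * (Bc*C*X + Ac*U) = Q
        rw [f1]
        have g3 : Y * (Bc * C * X + Ac * U)
            = F * C * X + (Q - Y * A * X - F * C * X - Y * B * L) := by
          rw [Matrix.mul_add, ← Matrix.mul_assoc Y Ac U, f3, ← Matrix.mul_assoc,
            ← Matrix.mul_assoc, f2]
        rw [g3, Matrix.mul_add]
        simp only [← Matrix.mul_assoc]
        abel
      · simp only [Matrix.mul_zero, Matrix.mul_one, Matrix.zero_mul, add_zero,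
          Matrix.mul_add]
        rw [← Matrix.mul_assoc, f2]
    -- blocks of LMI (10)
    set H : Matrix (Fin n ⊕ Fin n) (Fin d ⊕ Fin m) ℝ := fromBlocks D B (Y * D) (Y * B)
      with hH_def
    set K : Matrix (Fin n ⊕ Fin n) (Fin p ⊕ Fin p) ℝ := fromBlocks 0 0 F F with hK_def
    set Wa : Matrix (Fin d ⊕ Fin m) (Fin d ⊕ Fin m) ℝ := fromBlocks W 0 0 Gw⁻¹ with hWa_def
    set Wb : Matrix (Fin p ⊕ Fin p) (Fin p ⊕ Fin p) ℝ := fromBlocks V 0 0 Gv⁻¹ with hWb_def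
    have hP2bPD : (fromBlocks (fromBlocks W⁻¹ 0 0 Gw) 0 0 (fromBlocks V⁻¹ 0 0 Gv) :
        Matrix ((Fin d ⊕ Fin m) ⊕ (Fin p ⊕ Fin p)) ((Fin d ⊕ Fin m) ⊕ (Fin p ⊕ Fin p)) ℝ).PosDef :=
      myBlockDiagPosDef (myBlockDiagPosDef hW.inv hGw) (myBlockDiagPosDef hV.inv hGv)
    have hinv1 : (fromBlocks W⁻¹ 0 0 Gw : Matrix (Fin d ⊕ Fin m) (Fin d ⊕ Fin m) ℝ)⁻¹ = Wa := by
      rw [myBlockDiagInv (isUnit_nonsing_inv_det _ hW.det_pos.ne'.isUnit)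
        hGw.det_pos.ne'.isUnit, nonsing_inv_nonsing_inv _ hW.det_pos.ne'.isUnit]
    have hinv2 : (fromBlocks V⁻¹ 0 0 Gv : Matrix (Fin p ⊕ Fin p) (Fin p ⊕ Fin p) ℝ)⁻¹ = Wb := by
      rw [myBlockDiagInv (isUnit_nonsing_inv_det _ hV.det_pos.ne'.isUnit)
        hGv.det_pos.ne'.isUnit, nonsing_inv_nonsing_inv _ hV.det_pos.ne'.isUnit]
    have hP2binv : (fromBlocks (fromBlocks W⁻¹ 0 0 Gw) 0 0 (fromBlocks V⁻¹ 0 0 Gv) :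
        Matrix ((Fin d ⊕ Fin m) ⊕ (Fin p ⊕ Fin p)) ((Fin d ⊕ Fin m) ⊕ (Fin p ⊕ Fin p)) ℝ)⁻¹
        = fromBlocks Wa 0 0 Wb := by
      rw [myBlockDiagInv (myBlockDiagPosDef hW.inv hGw).det_pos.ne'.isUnit
        (myBlockDiagPosDef hV.inv hGv).det_pos.ne'.isUnit, hinv1, hinv2]
    have hSch1 := mySchur₂₂ hLMI1 hP2bPD
    rw [hP2binv] at hSch1
    have hM1 : (fromBlocks H K 0 0 :
          Matrix ((Fin n ⊕ Fin n) ⊕ (Fin n ⊕ Fin n)) ((Fin d ⊕ Fin m) ⊕ (Fin p ⊕ Fin p)) ℝ)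
        * fromBlocks Wa 0 0 Wb
        * (fromBlocks H K 0 0 :
          Matrix ((Fin n ⊕ Fin n) ⊕ (Fin n ⊕ Fin n)) ((Fin d ⊕ Fin m) ⊕ (Fin p ⊕ Fin p)) ℝ)ᵀ
        = fromBlocks (H * Wa * Hᵀ + K * Wb * Kᵀ) 0 0 0 := by
      rw [fromBlocks_transpose, fromBlocks_multiply, fromBlocks_multiply]
      simp
    rw [hM1] at hSch1
    have hsub : fromBlocks R G Gᵀ R - fromBlocks (H * Wa * Hᵀ + K * Wb * Kᵀ) 0 0 0
        = fromBlocks (R - (H * Wa * Hᵀ + K * Wb * Kᵀ)) G Gᵀ R := by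
      rw [sub_eq_add_neg, fromBlocks_neg, fromBlocks_add]
      simp [sub_eq_add_neg]
    rw [hsub] at hSch1
    have hSch2 : (R - (H * Wa * Hᵀ + K * Wb * Kᵀ) - G * R⁻¹ * Gᵀ).PosDef :=
      mySchur₂₂ hSch1 hR
    -- transformed input matrix
    set BB : Matrix (Fin n ⊕ Fin n) ((Fin d ⊕ Fin m) ⊕ (Fin p ⊕ Fin p)) ℝ :=
      fromBlocks (fromCols D B) 0 0 (fromCols Bc Bc) with hBB_def
    set EE : Matrix (Fin n ⊕ Fin n) ((Fin d ⊕ Fin m) ⊕ (Fin p ⊕ Fin p)) ℝ :=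
      fromBlocks (fromCols D B) 0 (fromCols (Y * D) (Y * B)) (fromCols F F)
      with hEE_def
    have hBBE : P2ᵀ * BB = EE := by
      rw [hP2T, hBB_def, fromBlocks_multiply, hEE_def]
      rw [fromBlocks_inj]
      exact ⟨by simp, by simp, by simp [mul_fromCols], by simp [mul_fromCols, f2]⟩
    have hSig : H * Wa * Hᵀ + K * Wb * Kᵀ = EE * fromBlocks Wa 0 0 Wb * EEᵀ := by
      rw [hH_def, hK_def, hWa_def, hWb_def, hEE_def]
      simp only [fromBlocks_transpose, fromBlocks_multiply, transpose_fromCols,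
        fromCols_mul_fromBlocks, fromCols_mul_fromRows, fromBlocks_add,
        Matrix.mul_zero, Matrix.zero_mul, add_zero, zero_add, transpose_zero]
    -- assemble
    have t1 : P2ᵀ * Xb * P2 = R := by rw [Matrix.mul_assoc, hXbP2, hPP]
    have t2 : P2ᵀ * (AA * Xb * AAᵀ) * P2 = G * R⁻¹ * Gᵀ := by
      have e1 : AA * Xb * AAᵀ = (AA * P1) * R⁻¹ * (AA * P1)ᵀ := by
        rw [hXb_def, transpose_mul]
        simp only [Matrix.mul_assoc]
      have e2 : (AA * P1)ᵀ * P2 = Gᵀ := by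
        rw [← hG, transpose_mul (P2ᵀ) (AA * P1), transpose_transpose]
      calc P2ᵀ * (AA * Xb * AAᵀ) * P2
          = (P2ᵀ * (AA * P1)) * R⁻¹ * ((AA * P1)ᵀ * P2) := by
            rw [e1]; simp only [Matrix.mul_assoc]
        _ = G * R⁻¹ * Gᵀ := by rw [hG, e2]
    have t3 : P2ᵀ * (BB * fromBlocks Wa 0 0 Wb * BBᵀ) * P2
        = EE * fromBlocks Wa 0 0 Wb * EEᵀ := by
      have e3 : BBᵀ * P2 = EEᵀ := by
        rw [← hBBE, transpose_mul (P2ᵀ) BB, transpose_transpose]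
      calc P2ᵀ * (BB * fromBlocks Wa 0 0 Wb * BBᵀ) * P2
          = (P2ᵀ * BB) * fromBlocks Wa 0 0 Wb * (BBᵀ * P2) := by
            simp only [Matrix.mul_assoc]
        _ = EE * fromBlocks Wa 0 0 Wb * EEᵀ := by rw [hBBE, e3]
    have key : P2ᵀ * (Xb - AA * Xb * AAᵀ - BB * fromBlocks Wa 0 0 Wb * BBᵀ) * P2
        = R - (H * Wa * Hᵀ + K * Wb * Kᵀ) - G * R⁻¹ * Gᵀ := by
      simp only [Matrix.mul_sub, Matrix.sub_mul]
      rw [t1, t2, t3, ← hSig, sub_right_comm]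
    exact myCongr_cancel hP2det.isUnit key hSch2
  · -- performance inequality
    set N : Matrix (Fin q) (Fin n ⊕ Fin n) ℝ := fromCols (Cz * X) Cz with hN_def
    have hNt : fromRows (X * Czᵀ) Czᵀ = Nᵀ := by
      rw [hN_def, transpose_fromCols, transpose_mul, hXT]
    rw [hNt] at hLMI2
    have hS3 : (Zbar - N * R⁻¹ * Nᵀ).PosDef := mySchur₂₂ hLMI2 hR
    have hCP1 : (fromCols Cz 0 : Matrix (Fin q) (Fin n ⊕ Fin n) ℝ) * P1 = N := by
      rw [hP1_def, hN_def, fromCols_mul_fromBlocks]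
      simp
    have hCXC : (fromCols Cz 0 : Matrix (Fin q) (Fin n ⊕ Fin n) ℝ) * Xb
        * (fromCols Cz 0 : Matrix (Fin q) (Fin n ⊕ Fin n) ℝ)ᵀ = N * R⁻¹ * Nᵀ := by
      rw [hXb_def, ← hCP1]
      simp only [transpose_mul, Matrix.mul_assoc]
    rw [hCXC]
    exact hS3
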